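/- Let k ≥ 1 and let λ_1,…,λ_k, μ_1,…,μ_k ∈ ℂ satisfy μ_i ≠ λ_j for all i, j, with data values w_1,…,w_k, v_1,…,v_k ∈ ℂ. Let 𝕃 and 𝕃_s be the Loewner and shifted Loewner matrices, 𝕍 ∈ ℂ^k the column vector with entries v_i, and 𝕎 ∈ ℂ^{1×k} the row vector with entries w_j. Fix an index l ∈ {1,…,k} and assume the matrix 𝕃_s − λ_l·𝕃 is invertible. Then the transfer function of the raw Loewner model (E, A, B, C) = (−𝕃, −𝕃_s, 𝕍, 𝕎) interpolates the right data at λ_l: H(λ_l) := 𝕎·(𝕃_s − λ_l·𝕃)⁻¹·𝕍 = w_l. -/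

import Mathlib

open Matrix Finset

noncomputable section

/-- The Loewner matrix `𝕃_{ij} = (v_i − w_j)/(μ_i − λ_j)`. -/
def LoewnerMatrix {k : ℕ} (lam mu w v : Fin k → ℂ) : Matrix (Fin k) (Fin k) ℂ :=
  fun i j => (v i - w j) / (mu i - lam j)

/-- The shifted Loewner matrix `(𝕃_s)_{ij} = (μ_i·v_i − λ_j·w_j)/(μ_i − λ_j)`. -/
def shiftedLoewnerMatrix {k : ℕ} (lam mu w v : Fin k → ℂ) : Matrix (Fin k) (Fin k) ℂ :=
  fun i j => (mu i * v i - lam j * w j) / (mu i - lam j)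

/-- the raw Loewner model `(−𝕃, −𝕃_s, 𝕍, 𝕎)` interpolates the right data:
`H(λ_l) = 𝕎·(𝕃_s − λ_l·𝕃)⁻¹·𝕍 = w_l`. -/
theorem stmt_12 {k : ℕ} (hk : 1 ≤ k) (lam mu w v : Fin k → ℂ)
    (hne : ∀ i j, mu i ≠ lam j) (l : Fin k)
    (hinv : IsUnit (shiftedLoewnerMatrix lam mu w v - lam l • LoewnerMatrix lam mu w v).det) :
    w ⬝ᵥ (shiftedLoewnerMatrix lam mu w v - lam l • LoewnerMatrix lam mu w v)⁻¹.mulVec v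
      = w l := by
  set M := shiftedLoewnerMatrix lam mu w v - lam l • LoewnerMatrix lam mu w v with hM
  have hcol : M.mulVec (Pi.single l 1) = v := by
    funext i
    simp only [Matrix.mulVec_single_one, Matrix.col_apply, hM, Matrix.sub_apply, Matrix.smul_apply,
      shiftedLoewnerMatrix, LoewnerMatrix, smul_eq_mul, mul_one]
    have hd : mu i - lam l ≠ 0 := sub_ne_zero.mpr (hne i l)
    field_simp
    ring
  have hinvM : M⁻¹.mulVec v = Pi.single l 1 := by
    rw [← hcol, Matrix.mulVec_mulVec, Matrix.nonsing_inv_mul M hinv, Matrix.one_mulVec]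
  rw [hinvM, dotProduct_single, mul_one]
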